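/- Under the stated relations, for every k = 1,…,⌊d/2⌋ one has Tr(A^k) = ω^{−k/m} Tr(B^k). -/
import Mathlib


open Matrix

/-- `omg d t` is ω^t = exp(2πi·t/d), where ω = exp(2πi/d). -/
noncomputable def omg (d : ℕ) (t : ℝ) : ℂ :=
  Complex.exp ((2 * Real.pi * t / d : ℝ) * Complex.I)

/-- The coefficient a_k = ω^{(2k−d)/(4m)} / (2 cos(π/(2m))). -/
noncomputable def acoef (d m k : ℕ) : ℂ :=
  omg d ((2 * (k : ℝ) - d) / (4 * m)) / ((2 * Real.cos (Real.pi / (2 * m)) : ℝ) : ℂ)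

/-- `abar d m A B k` is Ābar^{(k)} = a_k A^k + conj(a_k) B^k. -/
noncomputable def abar {n : Type*} [Fintype n] [DecidableEq n] (d m : ℕ)
    (A B : Matrix n n ℂ) (k : ℕ) : Matrix n n ℂ :=
  acoef d m k • A ^ k + (starRingEnd ℂ) (acoef d m k) • B ^ k

lemma omg_add (d : ℕ) (s t : ℝ) : omg d (s + t) = omg d s * omg d t := by
  unfold omg
  rw [← Complex.exp_add]
  congr 1
  push_cast
  ring

lemma omg_zero (d : ℕ) : omg d 0 = 1 := by
  unfold omg
  norm_num

lemma omg_conj (d : ℕ) (t : ℝ) : (starRingEnd ℂ) (omg d t) = omg d (-t) := by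
  unfold omg
  rw [← Complex.exp_conj]
  congr 1
  rw [_root_.map_mul, Complex.conj_ofReal, Complex.conj_I]
  push_cast
  ring

lemma omg_mul_neg (d : ℕ) (t : ℝ) : omg d t * omg d (-t) = 1 := by
  rw [← omg_add, add_neg_cancel, omg_zero]

lemma scalar_key (u v p q c t s g : ℂ) (huv : u * v = 1) (hpq : p * q = 1)
    (hc : p + q = c) (hp4 : p ^ 4 ≠ 1)
    (e3 : u*v*t + u*u*g + v*v*s + v*u*t = c^2 * t)
    (eI : u*u*g + u*v*t + v*u*t + v*v*s = c*(u*u*p*g) + c*(v*v*q*s)) :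
    t = v*v*q*q*s := by
  have key : (1 - p^4) * t = (1 - p^4) * (v*v*q*q*s) := by
    linear_combination eI + p^2 * e3 + (-2*t - 2*p^2*t) * huv
      + (u*u*g + v*v*s + 2*p^2*t + (1+p*q)*(v*v*p^2*s + t)) * hpq
      + (-(u*u*p*g + v*v*q*s) - p^2*t*(p+q+c)) * hc
  exact mul_left_cancel₀ (sub_ne_zero_of_ne (Ne.symm hp4)) key

/-- Tr(A^k) = ω^{−k/m} Tr(B^k) for k = 1,…,⌊d/2⌋. -/
theorem stmt4 (d m N : ℕ) (hd : 2 ≤ d) (hm : 2 ≤ m) (hN : 1 ≤ N)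
    (A B : Matrix (Fin N) (Fin N) ℂ)
    (hA : A ∈ Matrix.unitaryGroup (Fin N) ℂ) (hB : B ∈ Matrix.unitaryGroup (Fin N) ℂ)
    (hAd : A ^ d = 1) (hBd : B ^ d = 1)
    (hrel1 : ∀ k, 1 ≤ k → k ≤ d - 1 → abar d m A B k * abar d m A B (d - k) = 1)
    (hrel2 : ∀ k, 1 ≤ k → k ≤ d - 1 → abar d m A B k = (abar d m A B 1) ^ k) :
    ∀ k : ℕ, 1 ≤ k → k ≤ d / 2 →
      (A ^ k).trace = omg d (-((k : ℝ) / m)) * (B ^ k).trace := by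
  intro k hk1 hk2
  have hkd : k ≤ d := by omega
  have hkd1 : k ≤ d - 1 := by omega
  have hm0 : (m:ℝ) ≠ 0 := Nat.cast_ne_zero.mpr (by omega)
  have hd0 : (d:ℝ) ≠ 0 := Nat.cast_ne_zero.mpr (by omega)
  have hm2 : (2:ℝ) ≤ (m:ℝ) := by exact_mod_cast hm
  have hpi := Real.pi_pos
  have hcos_pos : 0 < Real.cos (Real.pi / (2 * (m:ℝ))) := by
    apply Real.cos_pos_of_mem_Ioo
    constructor
    · have h1 : 0 < Real.pi / (2 * (m:ℝ)) := by positivity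
      linarith
    · have h2m : (2:ℝ) < 2 * (m:ℝ) := by linarith
      exact div_lt_div_of_pos_left hpi (by norm_num) h2m
  have hc0 : ((2 * Real.cos (Real.pi / (2 * (m:ℝ))) : ℝ) : ℂ) ≠ 0 :=
    Complex.ofReal_ne_zero.mpr (by linarith)
  -- matrix power facts
  have hAA : A ^ k * A ^ (d - k) = 1 := by
    rw [← pow_add, show k + (d-k) = d by omega, hAd]
  have hAA' : A ^ (d - k) * A ^ k = 1 := by
    rw [← pow_add, show (d-k) + k = d by omega, hAd]
  have hBB : B ^ k * B ^ (d - k) = 1 := by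
    rw [← pow_add, show k + (d-k) = d by omega, hBd]
  have hBB' : B ^ (d - k) * B ^ k = 1 := by
    rw [← pow_add, show (d-k) + k = d by omega, hBd]
  have h1 := hrel1 k hk1 hkd1
  -- relation from hrel1, multiplied by A^k on the left, traced
  have hE3 : acoef d m k * acoef d m (d-k) * (A^k).trace
      + acoef d m k * (starRingEnd ℂ) (acoef d m (d-k)) * (A^(k+k) * B^(d-k)).trace
      + (starRingEnd ℂ) (acoef d m k) * acoef d m (d-k) * (B^k).trace
      + (starRingEnd ℂ) (acoef d m k) * (starRingEnd ℂ) (acoef d m (d-k)) * (A^k).trace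
      = (A^k).trace := by
    have h := congrArg (fun M => (A ^ k * M).trace) h1
    simp only [abar, mul_add, add_mul, smul_mul_assoc, mul_smul_comm, smul_smul,
      trace_add, trace_smul, smul_eq_mul, mul_one] at h
    rw [show A ^ k * (A ^ k * A ^ (d-k)) = A ^ k by rw [hAA, mul_one],
        show A ^ k * (B ^ k * B ^ (d-k)) = A ^ k by rw [hBB, mul_one]] at h
    have h3 : (A ^ k * (B ^ k * A ^ (d-k))).trace = (B^k).trace := by
      rw [trace_mul_comm, mul_assoc, hAA', mul_one]
    have h2 : (A ^ k * (A ^ k * B ^ (d-k))).trace = (A^(k+k) * B^(d-k)).trace := by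
      rw [← mul_assoc, ← pow_add]
    rw [h3, h2] at h
    linear_combination h
  rcases (show 2*k < d ∨ 2*k = d by omega) with h2k | h2k
  · -- general case
    have h2k1 : k + k ≤ d - 1 := by omega
    have habk : abar d m A B k * abar d m A B k = abar d m A B (k+k) := by
      rw [hrel2 k hk1 hkd1, hrel2 (k+k) (by omega) h2k1, pow_add]
    have hEI : acoef d m k * acoef d m k * (A^(k+k) * B^(d-k)).trace
        + acoef d m k * (starRingEnd ℂ) (acoef d m k) * (A^k).trace
        + (starRingEnd ℂ) (acoef d m k) * acoef d m k * (A^k).trace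
        + (starRingEnd ℂ) (acoef d m k) * (starRingEnd ℂ) (acoef d m k) * (B^k).trace
        = acoef d m (k+k) * (A^(k+k) * B^(d-k)).trace
          + (starRingEnd ℂ) (acoef d m (k+k)) * (B^k).trace := by
      have h := congrArg (fun M => (M * B ^ (d-k)).trace) habk
      simp only [abar, mul_add, add_mul, smul_mul_assoc, mul_smul_comm, smul_smul,
        trace_add, trace_smul, smul_eq_mul] at h
      rw [show A ^ k * A ^ k * B ^ (d-k) = A ^ (k+k) * B ^ (d-k) by rw [← pow_add],
          show A ^ k * B ^ k * B ^ (d-k) = A ^ k by rw [mul_assoc, hBB, mul_one],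
          show B ^ k * B ^ k * B ^ (d-k) = B ^ k by rw [mul_assoc, hBB, mul_one],
          show B ^ (k+k) * B ^ (d-k) = B ^ k by
            rw [← pow_add, show k + k + (d-k) = d + k by omega, pow_add, hBd, one_mul]] at h
      have h3 : (B ^ k * A ^ k * B ^ (d-k)).trace = (A^k).trace := by
        rw [mul_assoc, trace_mul_comm, mul_assoc, hBB', mul_one]
      rw [h3] at h
      linear_combination h
    -- scalar values of the coefficients
    have hxv : acoef d m k
        = omg d ((2 * (k:ℝ) - d) / (4 * m)) / ((2 * Real.cos (Real.pi / (2 * (m:ℝ))) : ℝ) : ℂ) := rfl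
    have hxcj : (starRingEnd ℂ) (acoef d m k)
        = omg d (-((2 * (k:ℝ) - d) / (4 * m))) / ((2 * Real.cos (Real.pi / (2 * (m:ℝ))) : ℝ) : ℂ) := by
      rw [hxv, map_div₀, omg_conj, Complex.conj_ofReal]
    have hyv : acoef d m (d - k)
        = omg d (-((2 * (k:ℝ) - d) / (4 * m))) / ((2 * Real.cos (Real.pi / (2 * (m:ℝ))) : ℝ) : ℂ) := by
      unfold acoef
      rw [show (2 * ((d - k : ℕ):ℝ) - d) / (4 * m) = -((2 * (k:ℝ) - d) / (4 * m)) by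
        rw [Nat.cast_sub hkd]; ring]
    have hycj : (starRingEnd ℂ) (acoef d m (d - k))
        = omg d ((2 * (k:ℝ) - d) / (4 * m)) / ((2 * Real.cos (Real.pi / (2 * (m:ℝ))) : ℝ) : ℂ) := by
      rw [hyv, map_div₀, omg_conj, Complex.conj_ofReal, neg_neg]
    have hzv : acoef d m (k + k)
        = omg d ((2 * (k:ℝ) - d) / (4 * m)) * omg d ((2 * (k:ℝ) - d) / (4 * m))
            * omg d ((d:ℝ) / (4 * m)) / ((2 * Real.cos (Real.pi / (2 * (m:ℝ))) : ℝ) : ℂ) := by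
      unfold acoef
      rw [show (2 * ((k + k : ℕ):ℝ) - d) / (4 * m)
            = ((2 * (k:ℝ) - d) / (4 * m)) + (((2 * (k:ℝ) - d) / (4 * m)) + ((d:ℝ) / (4 * m))) by
          push_cast; ring,
        omg_add, omg_add, ← mul_assoc]
    have hzcj : (starRingEnd ℂ) (acoef d m (k + k))
        = omg d (-((2 * (k:ℝ) - d) / (4 * m))) * omg d (-((2 * (k:ℝ) - d) / (4 * m)))
            * omg d (-((d:ℝ) / (4 * m))) / ((2 * Real.cos (Real.pi / (2 * (m:ℝ))) : ℝ) : ℂ) := by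
      rw [hzv]
      simp only [map_div₀, _root_.map_mul, omg_conj, Complex.conj_ofReal]
    rw [hxcj, hycj, hxv, hyv] at hE3
    rw [hxcj, hzcj, hxv, hzv] at hEI
    set C : ℂ := ((2 * Real.cos (Real.pi / (2 * (m:ℝ))) : ℝ) : ℂ) with hC
    set u : ℂ := omg d ((2 * (k:ℝ) - d) / (4 * m)) with hu
    set v : ℂ := omg d (-((2 * (k:ℝ) - d) / (4 * m))) with hv
    set p : ℂ := omg d ((d:ℝ) / (4 * m)) with hp
    set q : ℂ := omg d (-((d:ℝ) / (4 * m))) with hq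
    set t : ℂ := (A^k).trace with ht
    set s : ℂ := (B^k).trace with hs
    set g : ℂ := (A^(k+k) * B^(d-k)).trace with hg
    have hCinv : C * C⁻¹ = 1 := mul_inv_cancel₀ hc0
    have e3' : u*v*t + u*u*g + v*v*s + v*u*t = C^2*t := by
      linear_combination C^2 * hE3
        - (u*v*t + u*u*g + v*v*s + v*u*t) * (1 + C*C⁻¹) * hCinv
    have eI' : u*u*g + u*v*t + v*u*t + v*v*s = C*(u*u*p*g) + C*(v*v*q*s) := by
      linear_combination C^2 * hEI
        + (-(u*u*g + u*v*t + v*u*t + v*v*s) * (1 + C*C⁻¹) + C*(u*u*p*g) + C*(v*v*q*s)) * hCinv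
    have huv : u * v = 1 := by rw [hu, hv]; exact omg_mul_neg d _
    have hpq : p * q = 1 := by rw [hp, hq]; exact omg_mul_neg d _
    have hcpq : p + q = C := by
      rw [hp, hq, hC]
      unfold omg
      rw [show (2 * Real.pi * ((d:ℝ) / (4 * m)) / d : ℝ) = Real.pi / (2 * m) by
            field_simp; ring,
          show (2 * Real.pi * (-((d:ℝ) / (4 * m))) / d : ℝ) = -(Real.pi / (2 * m)) by
            field_simp; ring]
      rw [Complex.exp_mul_I, Complex.exp_mul_I, Complex.ofReal_neg, Complex.cos_neg,
        Complex.sin_neg]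
      push_cast
      ring
    have hp4 : p ^ 4 ≠ 1 := by
      rw [hp]
      have hpow : omg d ((d:ℝ) / (4 * m)) ^ 4
          = omg d (((d:ℝ) / (4 * m)) + (((d:ℝ) / (4 * m)) + (((d:ℝ) / (4 * m)) + ((d:ℝ) / (4 * m))))) := by
        rw [omg_add, omg_add, omg_add]; ring
      rw [hpow]
      unfold omg
      rw [show (2 * Real.pi * (((d:ℝ) / (4 * m)) + (((d:ℝ) / (4 * m)) + (((d:ℝ) / (4 * m)) + ((d:ℝ) / (4 * m))))) / d : ℝ)
            = 2 * Real.pi / m by field_simp; ring]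
      intro hcon
      have hre := congrArg Complex.re hcon
      rw [Complex.exp_ofReal_mul_I_re] at hre
      simp only [Complex.one_re] at hre
      have h01 : (0:ℝ) < 2 * Real.pi / m := by positivity
      have hlt : 2 * Real.pi / m < 2 * Real.pi := by
        apply div_lt_self (by positivity)
        linarith
      rw [Real.cos_eq_one_iff_of_lt_of_lt (by linarith) (by linarith)] at hre
      linarith
    have hfin := scalar_key u v p q C t s g huv hpq hcpq hp4 e3' eI'
    rw [show omg d (-((k:ℝ) / m)) = v*v*q*q by
      rw [hv, hq,
        show -((k:ℝ)/m) = (-((2 * (k:ℝ) - d) / (4 * m))) + ((-((2 * (k:ℝ) - d) / (4 * m)))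
          + ((-((d:ℝ) / (4 * m))) + (-((d:ℝ) / (4 * m))))) by field_simp; ring,
        omg_add, omg_add, omg_add]
      ring]
    exact hfin
  · -- case 2k = d
    have hdk2 : d - k = k := by omega
    rw [hdk2] at h1
    have hA2 : A ^ k * A ^ k = 1 := by rw [← pow_add, show k + k = d by omega, hAd]
    have hB2 : B ^ k * B ^ k = 1 := by rw [← pow_add, show k + k = d by omega, hBd]
    have hE3 : acoef d m k * acoef d m k * (A^k).trace
        + acoef d m k * (starRingEnd ℂ) (acoef d m k) * (B^k).trace
        + (starRingEnd ℂ) (acoef d m k) * acoef d m k * (B^k).trace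
        + (starRingEnd ℂ) (acoef d m k) * (starRingEnd ℂ) (acoef d m k) * (A^k).trace
        = (A^k).trace := by
      have h := congrArg (fun M => (A ^ k * M).trace) h1
      simp only [abar, mul_add, add_mul, smul_mul_assoc, mul_smul_comm, smul_smul,
        trace_add, trace_smul, smul_eq_mul, mul_one] at h
      rw [show A ^ k * (A ^ k * A ^ k) = A ^ k by rw [hA2, mul_one],
          show A ^ k * (A ^ k * B ^ k) = B ^ k by rw [← mul_assoc, hA2, one_mul],
          show A ^ k * (B ^ k * B ^ k) = A ^ k by rw [hB2, mul_one]] at h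
      have h3 : (A ^ k * (B ^ k * A ^ k)).trace = (B^k).trace := by
        rw [trace_mul_comm, mul_assoc, hA2, mul_one]
      rw [h3] at h
      linear_combination h
    have hEI : acoef d m k * acoef d m k * (B^k).trace
        + acoef d m k * (starRingEnd ℂ) (acoef d m k) * (A^k).trace
        + (starRingEnd ℂ) (acoef d m k) * acoef d m k * (A^k).trace
        + (starRingEnd ℂ) (acoef d m k) * (starRingEnd ℂ) (acoef d m k) * (B^k).trace
        = (B^k).trace := by
      have h := congrArg (fun M => (M * B ^ k).trace) h1
      simp only [abar, mul_add, add_mul, smul_mul_assoc, mul_smul_comm, smul_smul,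
        trace_add, trace_smul, smul_eq_mul, one_mul] at h
      rw [show A ^ k * A ^ k * B ^ k = B ^ k by rw [hA2, one_mul],
          show A ^ k * B ^ k * B ^ k = A ^ k by rw [mul_assoc, hB2, mul_one],
          show B ^ k * B ^ k * B ^ k = B ^ k by rw [hB2, one_mul]] at h
      have h3 : (B ^ k * A ^ k * B ^ k).trace = (A^k).trace := by
        rw [mul_assoc, trace_mul_comm, mul_assoc, hB2, mul_one]
      rw [h3] at h
      linear_combination h
    have hav : acoef d m k = 1 / ((2 * Real.cos (Real.pi / (2 * (m:ℝ))) : ℝ) : ℂ) := by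
      unfold acoef
      rw [show (2 * (k:ℝ) - d) / (4 * m) = 0 by
            have hdd : (d:ℝ) = 2 * k := by exact_mod_cast h2k.symm
            rw [hdd]; ring,
          omg_zero]
    have hacj : (starRingEnd ℂ) (acoef d m k)
        = 1 / ((2 * Real.cos (Real.pi / (2 * (m:ℝ))) : ℝ) : ℂ) := by
      rw [hav, map_div₀, _root_.map_one, Complex.conj_ofReal]
    rw [hacj, hav] at hE3 hEI
    set C : ℂ := ((2 * Real.cos (Real.pi / (2 * (m:ℝ))) : ℝ) : ℂ) with hC
    set t : ℂ := (A^k).trace with ht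
    set s : ℂ := (B^k).trace with hs
    have hCinv : C * C⁻¹ = 1 := mul_inv_cancel₀ hc0
    have e3' : 2*t + 2*s = C^2 * t := by
      linear_combination C^2 * hE3 - (2*t + 2*s) * (1 + C*C⁻¹) * hCinv
    have eI' : 2*t + 2*s = C^2 * s := by
      linear_combination C^2 * hEI - (2*t + 2*s) * (1 + C*C⁻¹) * hCinv
    have hC2 : C^2 ≠ 0 := pow_ne_zero 2 hc0
    have hts : t = s := mul_left_cancel₀ hC2 (by linear_combination eI' - e3')
    have hsin : 0 < Real.sin (Real.pi / (2 * (m:ℝ))) := by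
      apply Real.sin_pos_of_pos_of_lt_pi
      · positivity
      · apply div_lt_self hpi
        linarith
    have hc4 : (C^2 - 4 : ℂ) ≠ 0 := by
      have hr : (2*Real.cos (Real.pi/(2*(m:ℝ))))^2 - 4
          = -(4 * Real.sin (Real.pi/(2*(m:ℝ)))^2) := by
        linear_combination 4 * Real.sin_sq_add_cos_sq (Real.pi/(2*(m:ℝ)))
      have hval : (C^2 - 4 : ℂ) = ((-(4 * Real.sin (Real.pi / (2 * (m:ℝ)))^2) : ℝ) : ℂ) := by
        rw [hC, ← hr]
        push_cast
        ring
      rw [hval]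
      exact Complex.ofReal_ne_zero.mpr
        (ne_of_lt (by linarith [pow_pos hsin 2]))
    have h4t : (C^2 - 4) * t = 0 := by linear_combination -e3' - 2*hts
    have ht0 : t = 0 := by
      rcases mul_eq_zero.mp h4t with h | h
      · exact absurd h hc4
      · exact h
    have hs0 : s = 0 := by rw [← hts]; exact ht0
    rw [ht0, hs0, mul_zero]
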